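/- Let γ : [-ℓ/2, ℓ/2] → ℝ^q be a C² curve parametrized by arc length (‖γ'(t)‖ = 1 for all t) with ‖γ''(t)‖ ≤ 1/r₀ for all t, where r₀ > 0. If ℓ ≤ π r₀, then ‖γ(ℓ/2) - γ(-ℓ/2)‖ ≥ 2 r₀ sin(ℓ/(2 r₀)). -/

import Mathlib

open Real Set
open scoped RealInnerProductSpace

private lemma key_lemma {q : ℕ} (r₀ L : ℝ) (hr₀ : 0 < r₀) (hL : 0 < L)
    (γ' γ'' : ℝ → EuclideanSpace ℝ (Fin q))
    (hd2 : ∀ t ∈ Icc 0 L, HasDerivAt γ' (γ'' t) t)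
    (hunit : ∀ t ∈ Icc 0 L, ‖γ' t‖ = 1)
    (hcurv : ∀ t ∈ Icc 0 L, ‖γ'' t‖ ≤ 1 / r₀)
    (hlen : L ≤ π * r₀ / 2) :
    ∀ t ∈ Icc 0 L, Real.cos (t / r₀) ≤ ⟪γ' t, γ' 0⟫ := by
  have h0 : (0:ℝ) ∈ Icc (0:ℝ) L := ⟨le_refl _, hL.le⟩
  -- orthogonality of γ'' and γ'
  have horth : ∀ t ∈ Icc (0:ℝ) L, ⟪γ'' t, γ' t⟫ = 0 := by
    intro t ht
    have hud : UniqueDiffWithinAt ℝ (Icc (0:ℝ) L) t := uniqueDiffOn_Icc hL t ht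
    have h1 : HasDerivWithinAt (fun s => ⟪γ' s, γ' s⟫)
        (⟪γ' t, γ'' t⟫ + ⟪γ'' t, γ' t⟫) (Icc 0 L) t :=
      HasDerivWithinAt.inner ℝ (hd2 t ht).hasDerivWithinAt (hd2 t ht).hasDerivWithinAt
    have hconst : ∀ s ∈ Icc (0:ℝ) L, ⟪γ' s, γ' s⟫ = 1 := by
      intro s hs
      rw [real_inner_self_eq_norm_sq, hunit s hs]; norm_num
    have h2 : HasDerivWithinAt (fun s => ⟪γ' s, γ' s⟫) 0 (Icc 0 L) t :=
      (hasDerivWithinAt_const t _ (1:ℝ)).congr hconst (hconst t ht)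
    have he1 := h1.derivWithin hud
    have he2 := h2.derivWithin hud
    have hsymm : ⟪γ' t, γ'' t⟫ = ⟪γ'' t, γ' t⟫ := real_inner_comm _ _
    rw [he2] at he1
    linarith
  have hψcont : ContinuousOn (fun s => ⟪γ' s, γ' 0⟫) (Icc 0 L) := by
    apply ContinuousOn.inner _ continuousOn_const
    exact fun s hs => ((hd2 s hs).continuousAt).continuousWithinAt
  have main : ∀ ε : ℝ, 0 < ε → ε < π / (2 * (L + 1)) →
      ∀ t ∈ Icc (0:ℝ) L, Real.cos ((1/r₀ + ε) * t + ε) ≤ ⟪γ' t, γ' 0⟫ := by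
    intro ε hε hεs
    obtain ⟨k, hk⟩ : ∃ k : ℝ, k = 1/r₀ + ε := ⟨_, rfl⟩
    have hkpos : 0 < k := by rw [hk]; positivity
    rw [← hk]
    apply image_le_of_deriv_right_lt_deriv_boundary'
      (f := fun x => Real.cos (k * x + ε))
      (f' := fun x => -Real.sin (k * x + ε) * k)
      (B := fun s => ⟪γ' s, γ' 0⟫)
      (B' := fun s => ⟪γ'' s, γ' 0⟫)
    · exact (Real.continuous_cos.comp (((continuous_const.mul continuous_id).add
        continuous_const))).continuousOn
    · intro x _
      have : HasDerivAt (fun x => Real.cos (k * x + ε)) (-Real.sin (k * x + ε) * k) x := by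
        have h1 : HasDerivAt (fun x : ℝ => k * x + ε) (k * 1) x :=
          ((hasDerivAt_id x).const_mul k).add_const ε
        simpa [mul_one] using h1.cos
      exact this.hasDerivWithinAt
    · have : ⟪γ' 0, γ' 0⟫ = 1 := by
        rw [real_inner_self_eq_norm_sq, hunit 0 h0]; norm_num
      simpa [this, hunit 0 h0] using Real.cos_le_one (k * 0 + ε)
    · exact hψcont
    · intro x hx
      have hxm : x ∈ Icc (0:ℝ) L := ⟨hx.1, hx.2.le⟩
      have := (hd2 x hxm).hasDerivWithinAt (s := Ici x)
      simpa using HasDerivWithinAt.inner ℝ this (hasDerivWithinAt_const x _ (γ' 0))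
    · intro x hx hcontact
      have hxm : x ∈ Icc (0:ℝ) L := ⟨hx.1, hx.2.le⟩
      obtain ⟨θ, hθ⟩ : ∃ θ : ℝ, θ = k * x + ε := ⟨_, rfl⟩
      rw [← hθ] at hcontact ⊢
      have hθpos : 0 < θ := by
        have : 0 ≤ k * x := mul_nonneg hkpos.le hx.1
        rw [hθ]; linarith
      have hθlt : θ < π := by
        have h1 : k * x ≤ k * L := mul_le_mul_of_nonneg_left hx.2.le hkpos.le
        have h2 : k * L = L / r₀ + ε * L := by rw [hk]; ring
        have h3 : L / r₀ ≤ π / 2 := by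
          rw [div_le_iff₀ hr₀]; linarith
        have h4 : ε * (L + 1) < π / 2 := by
          have hL1 : 0 < 2 * (L + 1) := by linarith
          rw [lt_div_iff₀ hL1] at hεs
          nlinarith
        have h5 : ε * L + ε < π / 2 := by
          have he : ε * (L + 1) = ε * L + ε := by ring
          linarith
        rw [hθ]; linarith
      have hsinpos : 0 < Real.sin θ := Real.sin_pos_of_pos_of_lt_pi hθpos hθlt
      have hψx : ⟪γ' x, γ' 0⟫ = Real.cos θ := hcontact.symm
      obtain ⟨u, hu⟩ : ∃ u, u = γ' x := ⟨_, rfl⟩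
      obtain ⟨v, hv⟩ : ∃ v, v = γ' 0 := ⟨_, rfl⟩
      rw [← hu] at hψx
      rw [← hv] at hψx ⊢
      obtain ⟨w, hw⟩ : ∃ w, w = v - Real.cos θ • u := ⟨_, rfl⟩
      have huu : ⟪u, u⟫ = 1 := by
        rw [hu, real_inner_self_eq_norm_sq, hunit x hxm]; norm_num
      have hvv : ⟪v, v⟫ = 1 := by
        rw [hv, real_inner_self_eq_norm_sq, hunit 0 h0]; norm_num
      have huv : ⟪u, v⟫ = Real.cos θ := hψx
      have hvu : ⟪v, u⟫ = Real.cos θ := by rw [real_inner_comm]; exact hψx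
      have hwsq : ‖w‖^2 = Real.sin θ^2 := by
        have : ⟪w, w⟫ = Real.sin θ^2 := by
          rw [hw]
          simp only [inner_sub_left, inner_sub_right, real_inner_smul_left,
            real_inner_smul_right, huu, hvv, huv, hvu]
          have hpy := Real.sin_sq_add_cos_sq θ
          nlinarith [hpy]
        rw [← real_inner_self_eq_norm_sq, this]
      have hwnorm : ‖w‖ = Real.sin θ := by
        have h1 : ‖w‖ = Real.sqrt (‖w‖^2) := (Real.sqrt_sq (norm_nonneg w)).symm
        rw [h1, hwsq, Real.sqrt_sq hsinpos.le]
      have hiv : ⟪γ'' x, v⟫ = ⟪γ'' x, w⟫ := by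
        rw [hw, hu]
        simp only [inner_sub_right, real_inner_smul_right, horth x hxm]
        ring
      have hbound : -(‖γ'' x‖ * ‖w‖) ≤ ⟪γ'' x, w⟫ := by
        have := abs_real_inner_le_norm (γ'' x) w
        have h2 := neg_abs_le ⟪γ'' x, w⟫
        linarith
      have hcb : ‖γ'' x‖ * ‖w‖ ≤ (1/r₀) * Real.sin θ := by
        rw [hwnorm]
        exact mul_le_mul_of_nonneg_right (hcurv x hxm) hsinpos.le
      have hstrict : (1/r₀) * Real.sin θ < k * Real.sin θ := by
        apply mul_lt_mul_of_pos_right _ hsinpos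
        rw [hk]; linarith
      linarith [hiv, hbound, hcb, hstrict]
  intro t ht
  have hlim : Filter.Tendsto (fun ε : ℝ => Real.cos ((1/r₀ + ε) * t + ε))
      (nhdsWithin 0 (Ioi 0)) (nhds (Real.cos (t / r₀))) := by
    have hc : Continuous fun ε : ℝ => Real.cos ((1/r₀ + ε) * t + ε) :=
      Real.continuous_cos.comp (((continuous_const.add continuous_id).mul
        continuous_const).add continuous_id)
    have h := hc.tendsto 0
    have heq : (1/r₀ + 0) * t + 0 = t / r₀ := by ring
    rw [heq] at h
    exact h.mono_left nhdsWithin_le_nhds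
  apply le_of_tendsto hlim
  have hmem : Ioo (0:ℝ) (π / (2 * (L + 1))) ∈ nhdsWithin (0:ℝ) (Ioi 0) := by
    apply Ioo_mem_nhdsGT_of_mem
    exact ⟨le_refl _, by positivity⟩
  exact Filter.eventually_of_mem hmem (fun ε hε => main ε hε.1 hε.2 t ht)

theorem stmt0 {q : ℕ} (r₀ ℓ : ℝ) (hr₀ : 0 < r₀) (hℓ : 0 < ℓ)
    (γ γ' γ'' : ℝ → EuclideanSpace ℝ (Fin q))
    (hd1 : ∀ t ∈ Icc (-(ℓ / 2)) (ℓ / 2), HasDerivAt γ (γ' t) t)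
    (hd2 : ∀ t ∈ Icc (-(ℓ / 2)) (ℓ / 2), HasDerivAt γ' (γ'' t) t)
    (hunit : ∀ t ∈ Icc (-(ℓ / 2)) (ℓ / 2), ‖γ' t‖ = 1)
    (hcurv : ∀ t ∈ Icc (-(ℓ / 2)) (ℓ / 2), ‖γ'' t‖ ≤ 1 / r₀)
    (hlen : ℓ ≤ π * r₀) :
    ‖γ (ℓ / 2) - γ (-(ℓ / 2))‖ ≥ 2 * r₀ * Real.sin (ℓ / (2 * r₀)) := by
  have hL : 0 < ℓ / 2 := by linarith
  have h0 : (0:ℝ) ∈ Icc (-(ℓ / 2)) (ℓ / 2) := ⟨by linarith, by linarith⟩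
  have hsub : Icc (0:ℝ) (ℓ/2) ⊆ Icc (-(ℓ / 2)) (ℓ / 2) :=
    fun t ht => ⟨by linarith [ht.1], ht.2⟩
  have hsubneg : ∀ t ∈ Icc (0:ℝ) (ℓ/2), -t ∈ Icc (-(ℓ / 2)) (ℓ / 2) :=
    fun t ht => ⟨by linarith [ht.2], by linarith [ht.1]⟩
  have hlen2 : ℓ / 2 ≤ π * r₀ / 2 := by linarith
  -- right half
  have hpos := key_lemma r₀ (ℓ/2) hr₀ hL γ' γ''
    (fun t ht => hd2 t (hsub ht)) (fun t ht => hunit t (hsub ht))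
    (fun t ht => hcurv t (hsub ht)) hlen2
  -- left half: reversed curve
  have hnegkey := key_lemma r₀ (ℓ/2) hr₀ hL (fun s => -γ' (-s)) (fun s => γ'' (-s))
    (fun t ht => by
      have h := hd2 (-t) (hsubneg t ht)
      have hneg : HasDerivAt (fun s : ℝ => -s) (-1 : ℝ) t := (hasDerivAt_id t).neg
      have := HasDerivAt.scomp t (g₁ := γ') h hneg
      have h2 := this.neg
      simp only [neg_smul, one_smul, neg_neg] at h2
      exact h2)
    (fun t ht => by simpa using hunit (-t) (hsubneg t ht))
    (fun t ht => by simpa using hcurv (-t) (hsubneg t ht)) hlen2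
  have hall : ∀ t ∈ Icc (-(ℓ / 2)) (ℓ / 2), Real.cos (t / r₀) ≤ ⟪γ' t, γ' 0⟫ := by
    intro t ht
    rcases le_or_gt 0 t with h | h
    · exact hpos t ⟨h, ht.2⟩
    · have h1 := hnegkey (-t) ⟨by linarith, by linarith [ht.1]⟩
      simp only [neg_neg, inner_neg_neg] at h1
      have : Real.cos (-t / r₀) = Real.cos (t / r₀) := by
        rw [neg_div, Real.cos_neg]
      rw [this] at h1
      simpa using h1
  set v := γ' 0 with hv
  have hvnorm : ‖v‖ = 1 := hunit 0 h0
  have hψcont : ContinuousOn (fun s => ⟪γ' s, v⟫) (Icc (-(ℓ / 2)) (ℓ / 2)) := by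
    apply ContinuousOn.inner _ continuousOn_const
    exact fun s hs => ((hd2 s hs).continuousAt).continuousWithinAt
  have hle : -(ℓ/2) ≤ ℓ/2 := by linarith
  have hψint : IntervalIntegrable (fun s => ⟪γ' s, v⟫) MeasureTheory.volume (-(ℓ/2)) (ℓ/2) := by
    apply ContinuousOn.intervalIntegrable
    rwa [uIcc_of_le hle]
  have hcosint : IntervalIntegrable (fun s => Real.cos (s / r₀)) MeasureTheory.volume
      (-(ℓ/2)) (ℓ/2) := (Real.continuous_cos.comp (continuous_id.div_const r₀)).intervalIntegrable _ _
  have hFTC : ∫ t in (-(ℓ/2))..(ℓ/2), ⟪γ' t, v⟫ =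
      ⟪γ (ℓ/2), v⟫ - ⟪γ (-(ℓ/2)), v⟫ := by
    apply intervalIntegral.integral_eq_sub_of_hasDerivAt
      (f := fun t => ⟪γ t, v⟫) (f' := fun t => ⟪γ' t, v⟫)
    · intro t ht
      rw [uIcc_of_le hle] at ht
      simpa using HasDerivAt.inner ℝ (hd1 t ht) (hasDerivAt_const t v)
    · exact hψint
  have hcosval : ∫ t in (-(ℓ/2))..(ℓ/2), Real.cos (t / r₀) =
      2 * r₀ * Real.sin (ℓ / (2 * r₀)) := by
    rw [intervalIntegral.integral_comp_div (f := Real.cos) hr₀.ne', integral_cos]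
    rw [show -(ℓ/2)/r₀ = -(ℓ/(2*r₀)) by ring, show (ℓ/2)/r₀ = ℓ/(2*r₀) by ring,
      Real.sin_neg]
    simp [smul_eq_mul]; ring
  have hmono : ∫ t in (-(ℓ/2))..(ℓ/2), Real.cos (t / r₀) ≤
      ∫ t in (-(ℓ/2))..(ℓ/2), ⟪γ' t, v⟫ :=
    intervalIntegral.integral_mono_on hle hcosint hψint (fun t ht => hall t ht)
  have hinner : ⟪γ (ℓ/2) - γ (-(ℓ/2)), v⟫ = ⟪γ (ℓ/2), v⟫ - ⟪γ (-(ℓ/2)), v⟫ :=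
    inner_sub_left _ _ _
  have hcs : ⟪γ (ℓ/2) - γ (-(ℓ/2)), v⟫ ≤ ‖γ (ℓ/2) - γ (-(ℓ/2))‖ := by
    have := real_inner_le_norm (γ (ℓ/2) - γ (-(ℓ/2))) v
    rwa [hvnorm, mul_one] at this
  rw [ge_iff_le]
  calc 2 * r₀ * Real.sin (ℓ / (2 * r₀)) = ∫ t in (-(ℓ/2))..(ℓ/2), Real.cos (t / r₀) :=
        hcosval.symm
    _ ≤ ∫ t in (-(ℓ/2))..(ℓ/2), ⟪γ' t, v⟫ := hmono
    _ = ⟪γ (ℓ/2) - γ (-(ℓ/2)), v⟫ := by rw [hFTC, hinner]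
    _ ≤ ‖γ (ℓ/2) - γ (-(ℓ/2))‖ := hcs
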